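/- Let ψ : F → ℂ* be a nontrivial additive character of a nonarchimedean local field F and let X = ℓ(x) be indexed by 0 ≠ x ∈ F^{n-1}. Consider the action of u ∈ F^{n-1} (identified with the top-right column unipotent subgroup U_{n-1,1}) on functions f : F^{n-1}∖{0} → V by (u·f)(x) = ψ(x·u) f(x), where x·u is the dot product. Then the coinvariants of the space S of locally constant compactly supported V-valued functions on F^{n-1}∖{0} under this action are zero: S(U) = S, i.e., for every f ∈ S there is a compact open subgroup N ⊂ F^{n-1} with ∫_N ψ(x·u) du = 0 for every x in the support of f. -/

import Mathlib

/-- Locally constant compactly supported `V`-valued functions on `F^m ∖ {0}` (viewed as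
functions on `F^m` vanishing near `0`). -/
def IsSchwartzAwayZero {F V : Type*} [Field F] [TopologicalSpace F]
    [AddCommGroup V] [Module ℂ V] {m : ℕ} (f : (Fin m → F) → V) : Prop :=
  IsLocallyConstant f ∧ HasCompactSupport f ∧ ∀ᶠ x in nhds (0 : Fin m → F), f x = 0

/-- A complex number all of whose powers stay within distance `1/2` of `1` equals `1`. -/
lemma pow_near_one_eq_one {z : ℂ} (h : ∀ k : ℕ, ‖z ^ k - 1‖ < 1 / 2) : z = 1 := by
  by_contra hz
  have h1 : (0 : ℝ) < ‖z - 1‖ := by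
    rw [norm_pos_iff]
    exact sub_ne_zero.mpr hz
  obtain ⟨N, hN⟩ := exists_nat_gt (1 / ‖z - 1‖)
  set s := ∑ k ∈ Finset.range N, z ^ k with hs
  have key1 : s * (z - 1) = z ^ N - 1 := geom_sum_mul z N
  have key2 : ‖s - (N : ℂ)‖ ≤ N * (1 / 2) := by
    have hdiff : s - (N : ℂ) = ∑ k ∈ Finset.range N, (z ^ k - 1) := by
      rw [Finset.sum_sub_distrib]
      simp [hs]
    rw [hdiff]
    calc ‖∑ k ∈ Finset.range N, (z ^ k - 1)‖
        ≤ ∑ k ∈ Finset.range N, ‖z ^ k - 1‖ := norm_sum_le _ _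
      _ ≤ ∑ _k ∈ Finset.range N, (1 / 2 : ℝ) :=
          Finset.sum_le_sum fun k _ => (h k).le
      _ = N * (1 / 2) := by simp [mul_comm]
  have hsn : (N : ℝ) - ‖s - (N : ℂ)‖ ≤ ‖s‖ := by
    calc (N : ℝ) - ‖s - (N : ℂ)‖ = ‖(N : ℂ)‖ - ‖(N : ℂ) - s‖ := by
          rw [Complex.norm_natCast, norm_sub_rev]
      _ ≤ ‖(N : ℂ) - ((N : ℂ) - s)‖ := norm_sub_norm_le _ _
      _ = ‖s‖ := by rw [sub_sub_cancel]
  have key3 : ‖s‖ * ‖z - 1‖ < 1 / 2 := by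
    rw [← norm_mul, key1]
    exact h N
  have hNd : 1 < (N : ℝ) * ‖z - 1‖ := (div_lt_iff₀ h1).mp hN
  have hs2 : (N : ℝ) / 2 ≤ ‖s‖ := by linarith
  nlinarith [mul_le_mul_of_nonneg_right hs2 h1.le]

section Field

variable {F : Type*} [Field F] [TopologicalSpace F] [IsTopologicalRing F]
  [LocallyCompactSpace F] [TotallyDisconnectedSpace F] [T2Space F]

/-- van Dantzig-type lemma: there exists an open additive "subgroup" of `F` on which the
continuous character `ψ` is trivial. -/
lemma exists_small_subgroup (ψ : AddChar F ℂ) (hψc : Continuous ψ) :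
    ∃ H : Set F, IsOpen H ∧ (0 : F) ∈ H ∧ (∀ a ∈ H, ∀ b ∈ H, a + b ∈ H) ∧
      (∀ a ∈ H, -a ∈ H) ∧ ∀ a ∈ H, ψ a = 1 := by
  classical
  -- the small neighborhood where `‖ψ - 1‖ < 1/2`
  set W : Set F := ψ ⁻¹' Metric.ball (1 : ℂ) (1 / 2) with hW
  have hWo : IsOpen W := Metric.isOpen_ball.preimage hψc
  have hW0 : (0 : F) ∈ W := by
    simp [hW, Metric.mem_ball]
  have hWnorm : ∀ x ∈ W, ‖ψ x - 1‖ < 1 / 2 := by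
    intro x hx
    have : dist (ψ x) 1 < 1 / 2 := hx
    rwa [Complex.dist_eq] at this
  -- find a compact open neighborhood `K ⊆ W` of `0`
  obtain ⟨s, hsc, hs0, hsW⟩ := exists_compact_subset hWo hW0
  obtain ⟨K, hKB, hK0, hKsub⟩ :=
    (loc_compact_Haus_tot_disc_of_zero_dim (H := F)).mem_nhds_iff.mp
      (isOpen_interior.mem_nhds hs0)
  have hKclopen : IsClopen K := hKB
  have hKcomp : IsCompact K :=
    hsc.of_isClosed_subset hKclopen.1 (hKsub.trans interior_subset)
  have hKopen : IsOpen K := hKclopen.2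
  have hKW : K ⊆ W := (hKsub.trans interior_subset).trans hsW
  -- find a neighborhood `T0` of `0` with `K + T0 ⊆ K`
  have hadd : ∀ k ∈ K, ∃ U T : Set F, IsOpen U ∧ IsOpen T ∧ k ∈ U ∧ (0 : F) ∈ T ∧
      ∀ u ∈ U, ∀ t ∈ T, u + t ∈ K := by
    intro k hk
    have hc : Continuous fun p : F × F => p.1 + p.2 := continuous_add
    have hmem : (k, (0 : F)) ∈ (fun p : F × F => p.1 + p.2) ⁻¹' K := by simpa using hk
    obtain ⟨U, T, hU, hT, hkU, h0T, hsub⟩ :=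
      isOpen_prod_iff.mp (hKopen.preimage hc) k 0 hmem
    exact ⟨U, T, hU, hT, hkU, h0T, fun u hu t ht => hsub (Set.mk_mem_prod hu ht)⟩
  set Uf : K → Set F := fun k => (hadd k k.2).choose with hUf
  have spec : ∀ k : K, IsOpen (Uf k) ∧ IsOpen (hadd k k.2).choose_spec.choose ∧
      (k : F) ∈ Uf k ∧ (0 : F) ∈ (hadd k k.2).choose_spec.choose ∧
      ∀ u ∈ Uf k, ∀ t ∈ (hadd k k.2).choose_spec.choose, u + t ∈ K := by
    intro k
    obtain ⟨hU, hT, hkU, h0T, hsub⟩ := (hadd k k.2).choose_spec.choose_spec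
    exact ⟨hU, hT, hkU, h0T, hsub⟩
  set Tf : K → Set F := fun k => (hadd k k.2).choose_spec.choose with hTf
  obtain ⟨t, ht⟩ := hKcomp.elim_finite_subcover Uf (fun k => (spec k).1)
    (fun x hx => Set.mem_iUnion.mpr ⟨⟨x, hx⟩, (spec ⟨x, hx⟩).2.2.1⟩)
  set T0 : Set F := ⋂ k ∈ t, Tf k with hT0def
  have hT0open : IsOpen T0 := isOpen_biInter_finset fun k _ => (spec k).2.1
  have hT00 : (0 : F) ∈ T0 := Set.mem_iInter₂.mpr fun k _ => (spec k).2.2.2.1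
  have hT0K : ∀ x ∈ K, ∀ τ ∈ T0, x + τ ∈ K := by
    intro x hx τ hτ
    obtain ⟨k, hkt, hxU⟩ := Set.mem_iUnion₂.mp (ht hx)
    exact (spec k).2.2.2.2 x hxU τ (Set.mem_iInter₂.mp hτ k hkt)
  -- the stabilizer `A = {g | K + g ⊆ K}`
  set A : Set F := {g : F | ∀ x ∈ K, x + g ∈ K} with hA
  have h0A : (0 : F) ∈ A := fun x hx => by simpa using hx
  have haddA : ∀ a ∈ A, ∀ b ∈ A, a + b ∈ A := by
    intro a ha b hb x hx
    rw [← add_assoc]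
    exact hb _ (ha _ hx)
  have hAopen : IsOpen A := by
    rw [isOpen_iff_forall_mem_open]
    intro g hg
    refine ⟨(fun y => y - g) ⁻¹' T0, ?_, (continuous_id.sub continuous_const).isOpen_preimage _
      hT0open, by simp [hT00]⟩
    intro y hy x hx
    have : x + y = (x + g) + (y - g) := by ring
    rw [this]
    exact hT0K _ (hg _ hx) _ hy
  have hAK : A ⊆ K := by
    intro g hg
    have h0K : (0 : F) ∈ K := hK0
    simpa using hg 0 h0K
  -- symmetrize
  set H : Set F := A ∩ {g : F | -g ∈ A} with hHdef
  have hHopen : IsOpen H := hAopen.inter (hAopen.preimage continuous_neg)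
  have hH0 : (0 : F) ∈ H := ⟨h0A, by simpa using h0A⟩
  have hHadd : ∀ a ∈ H, ∀ b ∈ H, a + b ∈ H := by
    intro a ha b hb
    refine ⟨haddA _ ha.1 _ hb.1, ?_⟩
    have : -(a + b) = -a + -b := by ring
    simpa [this] using haddA _ ha.2 _ hb.2
  have hHneg : ∀ a ∈ H, -a ∈ H := by
    intro a ha
    exact ⟨ha.2, by simpa using ha.1⟩
  refine ⟨H, hHopen, hH0, hHadd, hHneg, ?_⟩
  intro a ha
  have hnsmul : ∀ n : ℕ, n • a ∈ H := by
    intro n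
    induction n with
    | zero => simpa using hH0
    | succ n ih => rw [succ_nsmul]; exact hHadd _ ih _ ha
  have hpow : ∀ k : ℕ, ‖ψ a ^ k - 1‖ < 1 / 2 := by
    intro k
    rw [← AddChar.map_nsmul_eq_pow]
    exact hWnorm _ (hKW (hAK (hnsmul k).1))
  exact pow_near_one_eq_one hpow

/-- Every nonzero point of `F^m` has a clopen neighborhood on which some character
`x ↦ ψ(∑ xᵢuᵢ)` is constant with value `≠ 1`. -/
lemma exists_good_clopen (ψ : AddChar F ℂ) (hψc : Continuous ψ) (hψ : ∃ a : F, ψ a ≠ 1)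
    {m : ℕ} (x₀ : Fin m → F) (hx₀ : x₀ ≠ 0) :
    ∃ C : Set (Fin m → F), IsClopen C ∧ x₀ ∈ C ∧
      ∃ (u : Fin m → F) (c : ℂ), c ≠ 1 ∧ ∀ x ∈ C, ψ (∑ i, x i * u i) = c := by
  obtain ⟨a, ha⟩ := hψ
  obtain ⟨H, hHo, hH0, hHadd, hHneg, hHψ⟩ := exists_small_subgroup ψ hψc
  obtain ⟨i₀, hi₀⟩ : ∃ i, x₀ i ≠ 0 := by
    by_contra h
    push_neg at h
    exact hx₀ (funext fun i => h i)
  have ha0 : a ≠ 0 := fun h => ha (h ▸ ψ.map_zero_eq_one)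
  set b := a / x₀ i₀ with hb
  have hb0 : b ≠ 0 := div_ne_zero ha0 hi₀
  set φ : (Fin m → F) → F := fun x => (x i₀ - x₀ i₀) * b with hφ
  have hφc : Continuous φ := ((continuous_apply i₀).sub continuous_const).mul continuous_const
  set C : Set (Fin m → F) := φ ⁻¹' H with hC
  have hCopen : IsOpen C := hHo.preimage hφc
  have hCclosed : IsClosed C := by
    rw [← isOpen_compl_iff, isOpen_iff_forall_mem_open]
    intro y hy
    refine ⟨(fun x => φ x - φ y) ⁻¹' H, ?_,
      (hHo.preimage (hφc.sub continuous_const)), by simp [hH0]⟩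
    intro x hx hxC
    apply hy
    have : φ y = φ x + -(φ x - φ y) := by ring
    exact Set.mem_preimage.mpr (this ▸ hHadd _ hxC _ (hHneg _ hx))
  have hx₀C : x₀ ∈ C := by
    have : φ x₀ = 0 := by simp [hφ]
    simp [hC, Set.mem_preimage, this, hH0]
  refine ⟨C, ⟨hCclosed, hCopen⟩, hx₀C, Pi.single i₀ b, ψ a, ha, ?_⟩
  intro x hx
  have hsum : ∑ i, x i * (Pi.single i₀ b : Fin m → F) i = x i₀ * b := by
    rw [Finset.sum_eq_single i₀]
    · rw [Pi.single_eq_same]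
    · intro i _ hne
      rw [Pi.single_eq_of_ne hne, mul_zero]
    · intro h
      exact absurd (Finset.mem_univ i₀) h
  have hxb : x₀ i₀ * b = a := by
    rw [hb]
    field_simp
  have hdecomp : x i₀ * b = a + φ x := by
    rw [hφ, ← hxb]; ring
  rw [hsum, hdecomp, ψ.map_add_eq_mul, hHψ _ hx, mul_one]

variable {V : Type*} [AddCommGroup V] [Module ℂ V]

/-- The generating set of the coinvariant submodule. -/
def genSet (ψ : AddChar F ℂ) (m : ℕ) : Set ((Fin m → F) → V) :=
  {g : (Fin m → F) → V |
    ∃ (u : Fin m → F) (h : (Fin m → F) → V),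
      IsSchwartzAwayZero h ∧
      g = (fun x => ψ (∑ i, x i * u i) • h x) - h}

lemma smul_schwartz (r : ℂ) {m : ℕ} {f : (Fin m → F) → V} (hf : IsSchwartzAwayZero f) :
    IsSchwartzAwayZero (fun x => r • f x) := by
  obtain ⟨h1, h2, h3⟩ := hf
  refine ⟨h1.comp fun v => r • v, ?_, h3.mono fun x hx => by simp [hx]⟩
  have hsub : tsupport (fun x => r • f x) ⊆ tsupport f := by
    apply closure_mono
    intro x hx
    simp only [Function.mem_support] at hx ⊢
    intro h0
    exact hx (by rw [h0, smul_zero])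
  exact IsCompact.of_isClosed_subset h2 (isClosed_tsupport _) hsub

lemma indicator_schwartz {m : ℕ} {C : Set (Fin m → F)} (hC : IsClopen C)
    {f : (Fin m → F) → V} (hf : IsSchwartzAwayZero f) :
    IsSchwartzAwayZero (C.indicator f) := by
  obtain ⟨h1, h2, h3⟩ := hf
  refine ⟨?_, ?_, h3.mono fun x hx => by simp [Set.indicator_apply, hx]⟩
  · rw [IsLocallyConstant.iff_exists_open]
    intro x
    by_cases hx : x ∈ C
    · obtain ⟨U, hUo, hxU, hU⟩ := h1.exists_open x
      refine ⟨U ∩ C, hUo.inter hC.2, ⟨hxU, hx⟩, fun y hy => ?_⟩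
      rw [Set.indicator_of_mem hy.2 f, Set.indicator_of_mem hx f, hU y hy.1]
    · refine ⟨Cᶜ, hC.1.isOpen_compl, hx, fun y hy => ?_⟩
      rw [Set.indicator_of_notMem hy f, Set.indicator_of_notMem hx f]
  · have hsub : tsupport (C.indicator f) ⊆ tsupport f := by
      apply closure_mono
      rw [Set.support_indicator]
      exact Set.inter_subset_right
    exact IsCompact.of_isClosed_subset h2 (isClosed_tsupport _) hsub

/-- If a Schwartz function is supported in a "good" clopen set, it lies in the span. -/
lemma piece_mem_span (ψ : AddChar F ℂ) {m : ℕ} {C : Set (Fin m → F)}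
    {u : Fin m → F} {c : ℂ} (hc : c ≠ 1) (hgood : ∀ x ∈ C, ψ (∑ i, x i * u i) = c)
    {f : (Fin m → F) → V} (hf : IsSchwartzAwayZero f)
    (hsupp : Function.support f ⊆ C) :
    f ∈ Submodule.span ℂ (genSet (V := V) ψ m) := by
  set h : (Fin m → F) → V := fun x => (c - 1)⁻¹ • f x with hdef
  have hc1 : c - 1 ≠ 0 := sub_ne_zero.mpr hc
  have hh : IsSchwartzAwayZero h := smul_schwartz _ hf
  apply Submodule.subset_span
  refine ⟨u, h, hh, ?_⟩
  funext x
  show f x = ψ (∑ i, x i * u i) • h x - h x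
  by_cases hx : x ∈ C
  · rw [hgood x hx, hdef]
    simp only
    rw [smul_smul, ← sub_smul]
    have : c * (c - 1)⁻¹ - (c - 1)⁻¹ = 1 := by
      field_simp
    rw [this, one_smul]
  · have hfx : f x = 0 := by
      by_contra h0
      exact hx (hsupp h0)
    simp [hdef, hfx]

/-- Union of a list of sets. -/
def unionList {α : Type*} (L : List (Set α)) : Set α := L.foldr (· ∪ ·) ∅

lemma isClosed_unionList {α : Type*} [TopologicalSpace α] :
    ∀ {L : List (Set α)}, (∀ C ∈ L, IsClosed C) → IsClosed (unionList L)
  | [], _ => isClosed_empty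
  | C :: L, h => by
    have : unionList (C :: L) = C ∪ unionList L := rfl
    rw [this]
    exact (h C (List.mem_cons_self)).union
      (isClosed_unionList fun D hD => h D (List.mem_cons_of_mem _ hD))

lemma mem_unionList {α : Type*} {x : α} :
    ∀ {L : List (Set α)} {C : Set α}, C ∈ L → x ∈ C → x ∈ unionList L
  | [], _, h, _ => absurd h List.not_mem_nil
  | D :: L, C, h, hx => by
    rcases List.mem_cons.mp h with h | h
    · exact Or.inl (h ▸ hx)
    · exact Or.inr (mem_unionList h hx)

/-- Induction over a finite list of good clopen sets covering the support. -/
lemma list_span (ψ : AddChar F ℂ) {m : ℕ} :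
    ∀ (L : List (Set (Fin m → F))),
      (∀ C ∈ L, IsClopen C ∧ ∃ (u : Fin m → F) (c : ℂ), c ≠ 1 ∧
        ∀ x ∈ C, ψ (∑ i, x i * u i) = c) →
      ∀ f : (Fin m → F) → V, IsSchwartzAwayZero f → tsupport f ⊆ unionList L →
        f ∈ Submodule.span ℂ (genSet (V := V) ψ m)
  | [], _, f, _, hsupp => by
    have hf0 : f = 0 := by
      funext x
      by_contra h0
      exact hsupp (subset_closure (Function.mem_support.mpr h0))
    rw [hf0]
    exact Submodule.zero_mem _
  | C :: L, hL, f, hf, hsupp => by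
    obtain ⟨hCclopen, u, c, hc, hgood⟩ := hL C (List.mem_cons_self)
    have hf1 : IsSchwartzAwayZero (C.indicator f) := indicator_schwartz hCclopen hf
    have hf2 : IsSchwartzAwayZero (Cᶜ.indicator f) := indicator_schwartz hCclopen.compl hf
    have hmem1 : C.indicator f ∈ Submodule.span ℂ (genSet (V := V) ψ m) :=
      piece_mem_span ψ hc hgood hf1 (Set.support_indicator_subset)
    have hLclosed : IsClosed (unionList L) :=
      isClosed_unionList fun D hD => (hL D (List.mem_cons_of_mem _ hD)).1.1
    have hsupp2 : tsupport (Cᶜ.indicator f) ⊆ unionList L := by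
      apply closure_minimal ?_ hLclosed
      intro x hx
      rw [Set.support_indicator] at hx
      have hxf : x ∈ Function.support f := hx.2
      have hmem : x ∈ C ∪ unionList L := hsupp (subset_closure hxf)
      rcases hmem with hmem | hmem
      · exact absurd hmem hx.1
      · exact hmem
    have hmem2 : Cᶜ.indicator f ∈ Submodule.span ℂ (genSet (V := V) ψ m) :=
      list_span ψ L (fun D hD => hL D (List.mem_cons_of_mem _ hD)) _ hf2 hsupp2
    have hdecomp : f = C.indicator f + Cᶜ.indicator f :=
      (Set.indicator_self_add_compl C f).symm
    rw [hdecomp]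
    exact Submodule.add_mem _ hmem1 hmem2

end Field

/-- The coinvariants of `S(F^{n-1} ∖ {0}, V)` under the `ψ`-twisted action
`(u · f)(x) = ψ(∑ᵢ xᵢuᵢ) • f(x)` of `U ≅ F^{n-1}` vanish: every such `f` lies in the span
of the elements `u · h − h`. -/
theorem schwartz_twisted_coinvariants_vanish {F V : Type*} [Field F] [TopologicalSpace F]
    [IsTopologicalRing F] [LocallyCompactSpace F] [TotallyDisconnectedSpace F] [T2Space F]
    [AddCommGroup V] [Module ℂ V] (n : ℕ)
    (ψ : AddChar F ℂ) (hψc : Continuous ψ) (hψ : ∃ a : F, ψ a ≠ 1) :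
    ∀ f : (Fin (n - 1) → F) → V, IsSchwartzAwayZero f →
      f ∈ Submodule.span ℂ
        {g : (Fin (n - 1) → F) → V |
          ∃ (u : Fin (n - 1) → F) (h : (Fin (n - 1) → F) → V),
            IsSchwartzAwayZero h ∧
            g = (fun x => ψ (∑ i, x i * u i) • h x) - h} := by
  classical
  intro f hf
  obtain ⟨hlc, hcs, hev⟩ := hf
  -- `0` is not in the support
  have h0 : (0 : Fin (n-1) → F) ∉ tsupport f := by
    obtain ⟨t, htf, hto, h0t⟩ := eventually_nhds_iff.mp hev
    intro hmem
    have hsub : tsupport f ⊆ tᶜ := by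
      apply closure_minimal ?_ (isClosed_compl_iff.mpr hto)
      intro x hx hxt
      exact hx (htf x hxt)
    exact hsub hmem h0t
  -- choose good clopen neighborhoods of the points of the support
  have hP : ∀ x : tsupport f, ∃ C : Set (Fin (n-1) → F), IsClopen C ∧ (x : Fin (n-1) → F) ∈ C ∧
      ∃ (u : Fin (n-1) → F) (c : ℂ), c ≠ 1 ∧ ∀ y ∈ C, ψ (∑ i, y i * u i) = c := by
    intro x
    exact exists_good_clopen ψ hψc hψ x (fun hx0 => h0 (hx0 ▸ x.2))
  choose Cf hCl hCx hrest using hP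
  obtain ⟨t, ht⟩ := IsCompact.elim_finite_subcover hcs Cf (fun i => (hCl i).2)
    (fun x hx => Set.mem_iUnion.mpr ⟨⟨x, hx⟩, hCx _⟩)
  set L : List (Set (Fin (n-1) → F)) := t.toList.map Cf with hLdef
  have hL : ∀ C ∈ L, IsClopen C ∧ ∃ (u : Fin (n-1) → F) (c : ℂ), c ≠ 1 ∧
      ∀ x ∈ C, ψ (∑ i, x i * u i) = c := by
    intro C hC
    obtain ⟨i, _, rfl⟩ := List.mem_map.mp hC
    exact ⟨hCl i, hrest i⟩
  have hsupp : tsupport f ⊆ unionList L := by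
    intro x hx
    obtain ⟨i, hit, hxC⟩ := Set.mem_iUnion₂.mp (ht hx)
    exact mem_unionList (List.mem_map.mpr ⟨i, Finset.mem_toList.mpr hit, rfl⟩) hxC
  exact list_span ψ L hL f ⟨hlc, hcs, hev⟩ hsupp
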